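/- (Greedy dominating set approximation.) Let G be a finite simple graph on vertex set V with maximum degree Δ, and let N[v] denote the closed neighborhood of v (v together with its neighbors). Suppose v₁, …, v_k is a sequence of vertices such that, setting W₀ = V and W_i = W_{i−1} \ N[v_i], for each i the span |N[v_i] ∩ W_{i−1}| is positive and is at least |N[u] ∩ W_{i−1}| for every vertex u ∈ V, and suppose W_k = ∅. Then {v₁, …, v_k} is a dominating set of G and k ≤ γ(G) · H(Δ + 1), where γ(G) is the domination number of G and H(d) = ∑_{i=1}^{d} 1/i is the d-th harmonic number; in particular k ≤ γ(G) · (1 + ln(Δ + 1)). -/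

import Mathlib

open Finset

noncomputable def gdsaHarm (d : ℕ) : ℝ := ∑ i ∈ Finset.Icc 1 d, (1 : ℝ) / i

lemma gdsaHarm_eq (d : ℕ) : gdsaHarm d = (harmonic d : ℝ) := by
  rw [gdsaHarm, harmonic_eq_sum_Icc]
  push_cast
  simp [one_div]

lemma gdsaHarm_zero : gdsaHarm 0 = 0 := by simp [gdsaHarm]

lemma gdsaHarm_mono {a b : ℕ} (h : a ≤ b) : gdsaHarm a ≤ gdsaHarm b := by
  apply Finset.sum_le_sum_of_subset_of_nonneg (Finset.Icc_subset_Icc_right h)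
  intro i _ _
  positivity

lemma gdsaHarm_sub {a b : ℕ} (h : b ≤ a) :
    ((a : ℝ) - b) / a ≤ gdsaHarm a - gdsaHarm b := by
  rcases Nat.eq_zero_or_pos a with rfl | ha
  · interval_cases b
    simp
  have key : gdsaHarm a - gdsaHarm b = ∑ i ∈ Finset.Ioc b a, (1 : ℝ) / i := by
    have h1 : ∀ d : ℕ, gdsaHarm d = ∑ i ∈ Finset.Ioc 0 d, (1 : ℝ) / i := by
      intro d; rw [gdsaHarm, ← Finset.Icc_add_one_left_eq_Ioc]; rfl
    rw [h1, h1, ← Finset.sum_Ioc_consecutive _ (Nat.zero_le b) h]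
    ring
  rw [key]
  have heq : ((a : ℝ) - b) / a = ∑ _i ∈ Finset.Ioc b a, (1 : ℝ) / a := by
    rw [Finset.sum_const, Nat.card_Ioc, nsmul_eq_mul, Nat.cast_sub h]
    ring
  rw [heq]
  apply Finset.sum_le_sum
  intro i hi
  rw [Finset.mem_Ioc] at hi
  apply one_div_le_one_div_of_le
  · exact_mod_cast Nat.lt_of_le_of_lt (Nat.zero_le b) hi.1
  · exact_mod_cast hi.2

lemma gdsa_chain (k : ℕ) (a s : ℕ → ℕ)
    (hd : ∀ i < k, a (i + 1) ≤ a i)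
    (hs : ∀ i < k, 0 < s i)
    (ha : ∀ i < k, a i ≤ s i) :
    ∑ i ∈ Finset.range k, ((a i : ℝ) - a (i + 1)) / s i
      ≤ gdsaHarm (a 0) - gdsaHarm (a k) := by
  induction k with
  | zero => simp
  | succ n ih =>
    rw [Finset.sum_range_succ]
    have h1 : ∑ i ∈ Finset.range n, ((a i : ℝ) - a (i + 1)) / s i
        ≤ gdsaHarm (a 0) - gdsaHarm (a n) :=
      ih (fun i hi => hd i (by omega)) (fun i hi => hs i (by omega))
        (fun i hi => ha i (by omega))
    have h2 : ((a n : ℝ) - a (n + 1)) / s n ≤ gdsaHarm (a n) - gdsaHarm (a (n + 1)) := by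
      rcases Nat.eq_zero_or_pos (a n) with h0 | hpos
      · have : a (n + 1) = 0 := by have := hd n (by omega); omega
        simp [h0, this]
      · have hnum : (0:ℝ) ≤ (a n : ℝ) - a (n + 1) := by
          have := hd n (by omega)
          exact sub_nonneg.mpr (by exact_mod_cast this)
        calc ((a n : ℝ) - a (n + 1)) / s n ≤ ((a n : ℝ) - a (n + 1)) / a n := by
              apply div_le_div_of_nonneg_left hnum (by exact_mod_cast hpos)
              exact_mod_cast ha n (by omega)
          _ ≤ gdsaHarm (a n) - gdsaHarm (a (n + 1)) := gdsaHarm_sub (hd n (by omega))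
    linarith

/-- Greedy dominating set approximation: if `v 0, …, v (k-1)` is a greedy sequence
of vertices (each with positive span, maximal among the spans of all vertices,
where the span of `u` w.r.t. the current set `W i` of uncovered vertices is
`|N[u] ∩ W i|`) which leaves no vertex uncovered, then `{v 0, …, v (k-1)}` is a
dominating set of `G` and `k ≤ γ(G) * H(Δ + 1) ≤ γ(G) * (1 + ln (Δ + 1))`,
where `γ(G)` is the domination number and `Δ` the maximum degree. -/
theorem greedy_dominating_set_approx {V : Type*} [Fintype V] [DecidableEq V]
    (G : SimpleGraph V) [DecidableRel G.Adj]
    (k : ℕ) (v : ℕ → V) (W : ℕ → Finset V)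
    (hW0 : W 0 = Finset.univ)
    (hWstep : ∀ i < k, W (i + 1) = W i \ insert (v i) (G.neighborFinset (v i)))
    (hspan : ∀ i < k,
      0 < ((insert (v i) (G.neighborFinset (v i))) ∩ W i).card ∧
      ∀ u : V, ((insert u (G.neighborFinset u)) ∩ W i).card ≤
        ((insert (v i) (G.neighborFinset (v i))) ∩ W i).card)
    (hend : W k = ∅)
    (gamma : ℕ)
    (hgamma : IsLeast
      {c : ℕ | ∃ D : Finset V, (∀ x ∉ D, ∃ u ∈ D, G.Adj x u) ∧ D.card = c} gamma) :
    (∀ x ∉ {u : V | ∃ i < k, v i = u}, ∃ w ∈ {u : V | ∃ i < k, v i = u}, G.Adj x w) ∧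
    (k : ℝ) ≤ (gamma : ℝ) * ∑ i ∈ Finset.Icc 1 (G.maxDegree + 1), (1 : ℝ) / i ∧
    (k : ℝ) ≤ (gamma : ℝ) * (1 + Real.log (G.maxDegree + 1)) := by
  classical
  set N : V → Finset V := fun u => insert u (G.neighborFinset u) with hN
  -- every vertex gets covered at some step
  have hcover : ∀ x : V, ∃ i < k, x ∈ W i ∧ x ∉ W (i + 1) := by
    intro x
    by_contra hc
    push_neg at hc
    have : ∀ i ≤ k, x ∈ W i := by
      intro i hi
      induction i with
      | zero => rw [hW0]; exact Finset.mem_univ x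
      | succ n ih => exact hc n (by omega) (ih (by omega))
    have := this k le_rfl
    rw [hend] at this
    exact absurd this (Finset.notMem_empty x)
  -- part 1: domination
  have part1 : ∀ x ∉ {u : V | ∃ i < k, v i = u},
      ∃ w ∈ {u : V | ∃ i < k, v i = u}, G.Adj x w := by
    intro x hx
    obtain ⟨i, hik, hxin, hxout⟩ := hcover x
    rw [hWstep i hik] at hxout
    have hmem : x ∈ N (v i) := by
      by_contra hn
      exact hxout (Finset.mem_sdiff.mpr ⟨hxin, hn⟩)
    have hne : x ≠ v i := by
      intro h
      exact hx ⟨i, hik, h.symm⟩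
    have hadj : G.Adj (v i) x := by
      rw [hN] at hmem
      simp only [Finset.mem_insert, SimpleGraph.mem_neighborFinset] at hmem
      rcases hmem with h | h
      · exact absurd h hne
      · exact h
    exact ⟨v i, ⟨i, hik, rfl⟩, hadj.symm⟩
  -- set up the optimal dominating set
  obtain ⟨D, hDdom, hDcard⟩ := hgamma.1
  have hDcov : ∀ x : V, ∃ u ∈ D, x ∈ N u := by
    intro x
    by_cases hx : x ∈ D
    · exact ⟨x, hx, Finset.mem_insert_self x _⟩
    · obtain ⟨u, hu, hadj⟩ := hDdom x hx
      exact ⟨u, hu, by simp [hN, SimpleGraph.mem_neighborFinset, hadj.symm]⟩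
  have hWsub : ∀ i < k, W (i + 1) ⊆ W i := by
    intro i hi
    rw [hWstep i hi]
    exact Finset.sdiff_subset
  -- the key counting bound
  have hmain : (k : ℝ) ≤ (gamma : ℝ) * gdsaHarm (G.maxDegree + 1) := by
    have step1 : ∀ i < k,
        (1 : ℝ) ≤ (∑ u ∈ D, ((N u ∩ (W i \ W (i + 1))).card : ℝ)) /
          ((N (v i) ∩ W i).card : ℝ) := by
      intro i hi
      have hpos : (0 : ℝ) < ((N (v i) ∩ W i).card : ℝ) := by
        exact_mod_cast (hspan i hi).1
      rw [one_le_div hpos]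
      have hS : W i \ W (i + 1) ⊆ D.biUnion (fun u => N u ∩ (W i \ W (i + 1))) := by
        intro x hx
        obtain ⟨u, hu, hxu⟩ := hDcov x
        exact Finset.mem_biUnion.mpr ⟨u, hu, Finset.mem_inter.mpr ⟨hxu, hx⟩⟩
      have hcard : (W i \ W (i + 1)).card ≤ ∑ u ∈ D, (N u ∩ (W i \ W (i + 1))).card :=
        le_trans (Finset.card_le_card hS) (Finset.card_biUnion_le)
      have hspanS : (N (v i) ∩ W i).card = (W i \ W (i + 1)).card := by
        rw [hWstep i hi, Finset.sdiff_sdiff_self_left, Finset.inter_comm]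
      rw [hspanS]
      calc ((W i \ W (i+1)).card : ℝ) ≤
          ((∑ u ∈ D, (N u ∩ (W i \ W (i + 1))).card : ℕ) : ℝ) := by exact_mod_cast hcard
        _ = ∑ u ∈ D, ((N u ∩ (W i \ W (i + 1))).card : ℝ) := by push_cast; rfl
    calc (k : ℝ) = ∑ _i ∈ Finset.range k, (1 : ℝ) := by simp
      _ ≤ ∑ i ∈ Finset.range k,
          (∑ u ∈ D, ((N u ∩ (W i \ W (i + 1))).card : ℝ)) /
            ((N (v i) ∩ W i).card : ℝ) := by
          apply Finset.sum_le_sum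
          intro i hi
          exact step1 i (Finset.mem_range.mp hi)
      _ = ∑ i ∈ Finset.range k, ∑ u ∈ D,
            ((N u ∩ (W i \ W (i + 1))).card : ℝ) / ((N (v i) ∩ W i).card : ℝ) := by
          apply Finset.sum_congr rfl
          intro i _
          rw [Finset.sum_div]
      _ = ∑ u ∈ D, ∑ i ∈ Finset.range k,
            ((N u ∩ (W i \ W (i + 1))).card : ℝ) / ((N (v i) ∩ W i).card : ℝ) :=
          Finset.sum_comm
      _ ≤ ∑ _u ∈ D, gdsaHarm (G.maxDegree + 1) := by
          apply Finset.sum_le_sum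
          intro u _
          -- rewrite each term and apply the chain lemma
          have hterm : ∀ i < k, ((N u ∩ (W i \ W (i + 1))).card : ℝ) =
              ((N u ∩ W i).card : ℝ) - ((N u ∩ W (i + 1)).card : ℝ) := by
            intro i hi
            have hsub : N u ∩ W (i + 1) ⊆ N u ∩ W i :=
              Finset.inter_subset_inter (le_refl (N u)) (hWsub i hi)
            have heq : N u ∩ (W i \ W (i + 1)) = (N u ∩ W i) \ (N u ∩ W (i + 1)) := by
              ext x
              simp only [Finset.mem_inter, Finset.mem_sdiff]
              tauto
            rw [heq, Finset.card_sdiff_of_subset hsub, Nat.cast_sub (Finset.card_le_card hsub)]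
          have hrw : ∑ i ∈ Finset.range k,
              ((N u ∩ (W i \ W (i + 1))).card : ℝ) / ((N (v i) ∩ W i).card : ℝ) =
              ∑ i ∈ Finset.range k,
              (((N u ∩ W i).card : ℝ) - ((N u ∩ W (i+1)).card : ℝ)) /
                ((N (v i) ∩ W i).card : ℝ) := by
            apply Finset.sum_congr rfl
            intro i hi
            rw [hterm i (Finset.mem_range.mp hi)]
          rw [hrw]
          have := gdsa_chain k (fun i => (N u ∩ W i).card)
            (fun i => (N (v i) ∩ W i).card)
            (fun i hi => Finset.card_le_card
              (Finset.inter_subset_inter (le_refl (N u)) (hWsub i hi)))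
            (fun i hi => (hspan i hi).1)
            (fun i hi => (hspan i hi).2 u)
          refine le_trans this ?_
          have hzero : (N u ∩ W k).card = 0 := by
            rw [hend]
            simp
          have hcard0 : (N u ∩ W 0).card ≤ G.maxDegree + 1 := by
            rw [hW0, Finset.inter_univ, hN]
            have : (insert u (G.neighborFinset u)).card = G.degree u + 1 := by
              rw [Finset.card_insert_of_notMem (G.notMem_neighborFinset_self u),
                G.card_neighborFinset_eq_degree]
            rw [this]
            exact Nat.add_le_add_right (G.degree_le_maxDegree u) 1
          rw [hzero, gdsaHarm_zero, sub_zero]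
          exact gdsaHarm_mono hcard0
      _ = (gamma : ℝ) * gdsaHarm (G.maxDegree + 1) := by
          rw [Finset.sum_const, hDcard, nsmul_eq_mul]
  -- conclude
  refine ⟨part1, ?_, ?_⟩
  · exact hmain
  · refine le_trans hmain ?_
    apply mul_le_mul_of_nonneg_left _ (Nat.cast_nonneg gamma)
    rw [gdsaHarm_eq]
    refine le_trans (harmonic_le_one_add_log (G.maxDegree + 1)) ?_
    push_cast
    exact le_refl _
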